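/- For the E(2) Kähler–Einstein ODE system restricted to solutions satisfying 0 ≤ c² - a² ≤ 2a²b² on their maximal interval, the functions a, b, c are all nondecreasing; hence they are bounded on any left half of the interval, and the maximal interval extends to -∞. -/

import Mathlib

/-- A positive solution of the E(2) Kähler–Einstein system on a set `s`. -/
def E2Sol (a b c : ℝ → ℝ) (s : Set ℝ) : Prop :=
  ∀ t ∈ s, (0 < a t ∧ 0 < b t ∧ 0 < c t) ∧
    HasDerivAt a (a t / 2 * (-(a t) ^ 2 + (c t) ^ 2)) t ∧
    HasDerivAt b (b t / 2 * ((a t) ^ 2 + (c t) ^ 2)) t ∧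
    HasDerivAt c (c t / 2 * ((a t) ^ 2 - (c t) ^ 2 + 2 * (a t) ^ 2 * (b t) ^ 2)) t

open Set Filter Topology

lemma monoAux {f f' : ℝ → ℝ} {D : Set ℝ} (hD : Convex ℝ D)
    (hc : ContinuousOn f D)
    (hf : ∀ t ∈ interior D, HasDerivAt f (f' t) t)
    (h0 : ∀ t ∈ interior D, 0 ≤ f' t) : MonotoneOn f D :=
  monotoneOn_of_deriv_nonneg hD hc
    (fun t ht => (hf t ht).differentiableAt.differentiableWithinAt)
    (fun t ht => (hf t ht).deriv ▸ h0 t ht)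

/-- exponential lower bound from a log-derivative bound -/
lemma logLower {f fd : ℝ → ℝ} {I : Set ℝ} (hIo : IsOpen I) (hIc : Convex ℝ I)
    (hf : ∀ t ∈ I, HasDerivAt f (fd t) t) (hpos : ∀ t ∈ I, 0 < f t)
    {t₂ K : ℝ} (ht₂ : t₂ ∈ I)
    (hK : ∀ t ∈ I, t ≤ t₂ → fd t ≤ K * f t) :
    ∀ t ∈ I, t ≤ t₂ → f t₂ * Real.exp (-(K * (t₂ - t))) ≤ f t := by
  set h : ℝ → ℝ := fun t => K * t - Real.log (f t) with hh
  set D : Set ℝ := I ∩ Iic t₂ with hD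
  have hint : interior D = I ∩ Iio t₂ := by
    rw [hD, interior_inter, hIo.interior_eq, interior_Iic]
  have hmono : MonotoneOn h D := by
    apply monoAux (f' := fun t => K - fd t / f t) (hIc.inter (convex_Iic t₂))
    · intro t ht
      exact ((continuous_const.mul continuous_id).continuousAt.sub
        (((hf t ht.1).continuousAt).log (hpos t ht.1).ne')).continuousWithinAt
    · intro t ht
      rw [hint] at ht
      have := ((hasDerivAt_id t).const_mul K).sub ((hf t ht.1).log (hpos t ht.1).ne')
      rw [mul_one] at this; exact this
    · intro t ht
      rw [hint] at ht
      have h1 := hK t ht.1 ht.2.le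
      have h2 := hpos t ht.1
      have : fd t / f t ≤ K := (div_le_iff₀ h2).2 (by linarith)
      linarith
  intro t ht htle
  have key : h t ≤ h t₂ := hmono ⟨ht, htle⟩ ⟨ht₂, self_mem_Iic⟩ htle
  have h1 : Real.log (f t₂) - K * (t₂ - t) ≤ Real.log (f t) := by
    simp only [hh] at key; linarith
  calc f t₂ * Real.exp (-(K * (t₂ - t)))
      = Real.exp (Real.log (f t₂) - K * (t₂ - t)) := by
        rw [Real.exp_sub, Real.exp_log (hpos t₂ ht₂), Real.exp_neg]
        rw [div_eq_mul_inv, ← Real.exp_neg]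
    _ ≤ Real.exp (Real.log (f t)) := Real.exp_le_exp.2 h1
    _ = f t := Real.exp_log (hpos t ht)

noncomputable def e2v : ℝ × ℝ × ℝ → ℝ × ℝ × ℝ := fun p =>
  (p.1 / 2 * (-p.1 ^ 2 + p.2.2 ^ 2),
   p.2.1 / 2 * (p.1 ^ 2 + p.2.2 ^ 2),
   p.2.2 / 2 * (p.1 ^ 2 - p.2.2 ^ 2 + 2 * p.1 ^ 2 * p.2.1 ^ 2))

lemma e2v_contDiff : ContDiff ℝ 1 e2v := by
  have h1 : ContDiff ℝ 1 (fun p : ℝ × ℝ × ℝ => p.1) := contDiff_fst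
  have h2 : ContDiff ℝ 1 (fun p : ℝ × ℝ × ℝ => p.2.1) := contDiff_snd.fst
  have h3 : ContDiff ℝ 1 (fun p : ℝ × ℝ × ℝ => p.2.2) := contDiff_snd.snd
  exact (((h1.div_const 2).mul (((h1.pow 2).neg).add (h3.pow 2))).prodMk
    (((h2.div_const 2).mul ((h1.pow 2).add (h3.pow 2))).prodMk
    ((h3.div_const 2).mul (((h1.pow 2).sub (h3.pow 2)).add
      ((contDiff_const.mul (h1.pow 2)).mul (h2.pow 2))))))

lemma compDerivs {f : ℝ → ℝ × ℝ × ℝ} {p : ℝ × ℝ × ℝ} {t : ℝ} (h : HasDerivAt f p t) :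
    HasDerivAt (fun s => (f s).1) p.1 t ∧ HasDerivAt (fun s => (f s).2.1) p.2.1 t ∧
      HasDerivAt (fun s => (f s).2.2) p.2.2 t := by
  have h1 := (hasFDerivAt_fst (𝕜 := ℝ)).comp t h.hasFDerivAt
  have h2 := (hasFDerivAt_snd (𝕜 := ℝ)).comp t h.hasFDerivAt
  have h3 := (hasFDerivAt_fst (𝕜 := ℝ)).comp t h2
  have h4 := (hasFDerivAt_snd (𝕜 := ℝ)).comp t h2
  exact ⟨by simpa [Function.comp_def] using h1.hasDerivAt, by simpa [Function.comp_def] using h3.hasDerivAt, by simpa [Function.comp_def] using h4.hasDerivAt⟩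

lemma glueRight {g gd : ℝ → ℝ} {r t₂ L e : ℝ} (hrt : r < t₂)
    (hg : ∀ s ∈ Ioo r t₂, HasDerivAt g (gd s) s)
    (hL : Tendsto g (𝓝[>] r) (𝓝 L))
    (he : Tendsto gd (𝓝[>] r) (𝓝 e)) :
    HasDerivWithinAt (fun s => if s ≤ r then L else g s) e (Ici r) r := by
  set F : ℝ → ℝ := fun s => if s ≤ r then L else g s with hF
  have hFg : ∀ s ∈ Ioo r t₂, HasDerivAt F (gd s) s := fun s hs =>
    (hg s hs).congr_of_eventuallyEq
      (eventually_of_mem (Ioi_mem_nhds hs.1) fun x hx => if_neg (not_le.2 hx))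
  have hmem : Ioo r t₂ ∈ 𝓝[>] r := Ioo_mem_nhdsGT hrt
  apply hasDerivWithinAt_Ici_of_tendsto_deriv (s := Ioo r t₂)
  · exact fun s hs => (hFg s hs).differentiableAt.differentiableWithinAt
  · have h1 : F =ᶠ[𝓝[Ioo r t₂] r] g :=
      eventually_of_mem self_mem_nhdsWithin fun x hx => if_neg (not_le.2 hx.1)
    have h2 : Tendsto F (𝓝[Ioo r t₂] r) (𝓝 L) :=
      (hL.mono_left (nhdsWithin_mono _ Ioo_subset_Ioi_self)).congr' h1.symm
    have : F r = L := if_pos le_rfl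
    rw [ContinuousWithinAt, this]
    exact h2
  · exact hmem
  · have h1 : gd =ᶠ[𝓝[>] r] fun x => deriv F x :=
      eventually_of_mem hmem fun s hs => ((hFg s hs).deriv).symm
    exact he.congr' h1
open Set Filter Topology

set_option maxHeartbeats 2000000

/-- If a positive maximal solution satisfies 0 ≤ c²-a² ≤ 2a²b², then a, b, c are
nondecreasing, bounded on any left half of the interval, and the maximal interval
extends to -∞. -/
theorem stmt_6 (a b c : ℝ → ℝ) (ξ η : EReal) (hlt : ξ < η) (I : Set ℝ)
    (hI : I = {t : ℝ | ξ < (t : EReal) ∧ (t : EReal) < η})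
    (hsol : E2Sol a b c I)
    (hcon : ∀ t ∈ I, 0 ≤ (c t) ^ 2 - (a t) ^ 2 ∧
      (c t) ^ 2 - (a t) ^ 2 ≤ 2 * (a t) ^ 2 * (b t) ^ 2)
    (hmax : ∀ (A B C : ℝ → ℝ) (ξ' η' : EReal), ξ' ≤ ξ → η ≤ η' →
      E2Sol A B C {t : ℝ | ξ' < (t : EReal) ∧ (t : EReal) < η'} →
      Set.EqOn A a I → Set.EqOn B b I → Set.EqOn C c I → ξ' = ξ ∧ η' = η) :
    MonotoneOn a I ∧ MonotoneOn b I ∧ MonotoneOn c I ∧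
    (∀ t₀ ∈ I, BddAbove (a '' (I ∩ Set.Iic t₀)) ∧ BddAbove (b '' (I ∩ Set.Iic t₀)) ∧
      BddAbove (c '' (I ∩ Set.Iic t₀))) ∧
    ξ = ⊥ := by
  have hIopen : IsOpen I := by
    have : I = (fun t : ℝ => (t : EReal)) ⁻¹' Set.Ioo ξ η := hI
    rw [this]
    exact isOpen_Ioo.preimage continuous_coe_real_ereal
  have hIconv : Convex ℝ I := by
    rw [convex_iff_ordConnected]
    constructor
    intro x hx y hy z hz
    rw [hI] at hx hy ⊢
    exact ⟨lt_of_lt_of_le hx.1 (EReal.coe_le_coe_iff.2 hz.1),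
      lt_of_le_of_lt (EReal.coe_le_coe_iff.2 hz.2) hy.2⟩
  have hpos : ∀ t ∈ I, 0 < a t ∧ 0 < b t ∧ 0 < c t := fun t ht => (hsol t ht).1
  have hconta : ContinuousOn a I := fun t ht => (hsol t ht).2.1.continuousAt.continuousWithinAt
  have hcontb : ContinuousOn b I := fun t ht => (hsol t ht).2.2.1.continuousAt.continuousWithinAt
  have hcontc : ContinuousOn c I := fun t ht => (hsol t ht).2.2.2.continuousAt.continuousWithinAt
  have hmonoa : MonotoneOn a I := by
    apply monoAux (f' := fun t => a t / 2 * (-(a t) ^ 2 + (c t) ^ 2)) hIconv hconta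
    · intro t ht; rw [hIopen.interior_eq] at ht; exact (hsol t ht).2.1
    · intro t ht; rw [hIopen.interior_eq] at ht
      have h1 := (hpos t ht).1
      have h2 := (hcon t ht).1
      have : (0:ℝ) ≤ -(a t) ^ 2 + (c t) ^ 2 := by linarith
      positivity
  have hmonob : MonotoneOn b I := by
    apply monoAux (f' := fun t => b t / 2 * ((a t) ^ 2 + (c t) ^ 2)) hIconv hcontb
    · intro t ht; rw [hIopen.interior_eq] at ht; exact (hsol t ht).2.2.1
    · intro t ht; rw [hIopen.interior_eq] at ht
      have h1 := (hpos t ht).2.1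
      positivity
  have hmonoc : MonotoneOn c I := by
    apply monoAux (f' := fun t => c t / 2 * ((a t) ^ 2 - (c t) ^ 2 + 2 * (a t) ^ 2 * (b t) ^ 2))
      hIconv hcontc
    · intro t ht; rw [hIopen.interior_eq] at ht; exact (hsol t ht).2.2.2
    · intro t ht; rw [hIopen.interior_eq] at ht
      have h1 := (hpos t ht).2.2
      have h2 := (hcon t ht).2
      have : (0:ℝ) ≤ (a t) ^ 2 - (c t) ^ 2 + 2 * (a t) ^ 2 * (b t) ^ 2 := by linarith
      positivity
  refine ⟨hmonoa, hmonob, hmonoc, ?_, ?_⟩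
  · intro t₀ ht₀
    refine ⟨⟨a t₀, ?_⟩, ⟨b t₀, ?_⟩, ⟨c t₀, ?_⟩⟩ <;>
      · rintro y ⟨s, ⟨hsI, hs⟩, rfl⟩
        first
          | exact hmonoa hsI ht₀ hs
          | exact hmonob hsI ht₀ hs
          | exact hmonoc hsI ht₀ hs
  ·
    by_contra hbot
    have hξtop : ξ ≠ ⊤ := hlt.ne_top
    set r : ℝ := ξ.toReal with hrdef
    have hr : ξ = (r : EReal) := (EReal.coe_toReal hξtop hbot).symm
    obtain ⟨t₂, ht₂l, ht₂r⟩ := EReal.exists_between_coe_real hlt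
    have ht₂I : t₂ ∈ I := by rw [hI]; exact ⟨ht₂l, ht₂r⟩
    have hrt₂ : r < t₂ := by
      rw [hr] at ht₂l; exact_mod_cast ht₂l
    have hSI : Ioo r t₂ ⊆ I := by
      intro t ht
      rw [hI]
      refine ⟨?_, lt_trans ?_ ht₂r⟩
      · rw [hr]; exact_mod_cast ht.1
      · exact_mod_cast ht.2
    obtain ⟨K, hKdef⟩ : ∃ K : ℝ, K = (a t₂) ^ 2 * (b t₂) ^ 2 + ((a t₂) ^ 2 + (c t₂) ^ 2) / 2 := ⟨_, rfl⟩
    have hK0 : 0 ≤ K := by rw [hKdef]; positivity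
    -- bound on log-derivatives
    have hsq : ∀ t ∈ I, t ≤ t₂ →
        (a t) ^ 2 ≤ (a t₂) ^ 2 ∧ (b t) ^ 2 ≤ (b t₂) ^ 2 ∧ (c t) ^ 2 ≤ (c t₂) ^ 2 := by
      intro t ht hle
      have h1 := hmonoa ht ht₂I hle
      have h2 := hmonob ht ht₂I hle
      have h3 := hmonoc ht ht₂I hle
      obtain ⟨p1, p2, p3⟩ := hpos t ht
      exact ⟨by nlinarith, by nlinarith, by nlinarith⟩
    have hKa : ∀ t ∈ I, t ≤ t₂ → a t / 2 * (-(a t) ^ 2 + (c t) ^ 2) ≤ K * a t := by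
      intro t ht hle
      obtain ⟨e1, e2, e3⟩ := hsq t ht hle
      obtain ⟨p1, p2, p3⟩ := hpos t ht
      have h2 := (hcon t ht).2
      have key : (c t) ^ 2 - (a t) ^ 2 ≤ 2 * K := by
        have : (a t) ^ 2 * (b t) ^ 2 ≤ (a t₂) ^ 2 * (b t₂) ^ 2 :=
          mul_le_mul e1 e2 (by positivity) (by positivity)
        nlinarith [sq_nonneg (a t₂), sq_nonneg (c t₂), hKdef]
      nlinarith
    have hKb : ∀ t ∈ I, t ≤ t₂ → b t / 2 * ((a t) ^ 2 + (c t) ^ 2) ≤ K * b t := by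
      intro t ht hle
      obtain ⟨e1, e2, e3⟩ := hsq t ht hle
      obtain ⟨p1, p2, p3⟩ := hpos t ht
      have key : (a t) ^ 2 + (c t) ^ 2 ≤ 2 * K := by nlinarith [sq_nonneg (a t₂), sq_nonneg (b t₂), hKdef, mul_nonneg (sq_nonneg (a t₂)) (sq_nonneg (b t₂))]
      nlinarith
    have hKc : ∀ t ∈ I, t ≤ t₂ →
        c t / 2 * ((a t) ^ 2 - (c t) ^ 2 + 2 * (a t) ^ 2 * (b t) ^ 2) ≤ K * c t := by
      intro t ht hle
      obtain ⟨e1, e2, e3⟩ := hsq t ht hle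
      obtain ⟨p1, p2, p3⟩ := hpos t ht
      have h1 := (hcon t ht).1
      have key : (a t) ^ 2 - (c t) ^ 2 + 2 * (a t) ^ 2 * (b t) ^ 2 ≤ 2 * K := by
        have : (a t) ^ 2 * (b t) ^ 2 ≤ (a t₂) ^ 2 * (b t₂) ^ 2 :=
          mul_le_mul e1 e2 (by positivity) (by positivity)
        nlinarith [sq_nonneg (a t₂), sq_nonneg (c t₂), hKdef]
      nlinarith
    -- exponential lower bounds
    have hlowa := logLower hIopen hIconv (fun t ht => (hsol t ht).2.1) (fun t ht => (hpos t ht).1)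
      ht₂I hKa
    have hlowb := logLower hIopen hIconv (fun t ht => (hsol t ht).2.2.1)
      (fun t ht => (hpos t ht).2.1) ht₂I hKb
    have hlowc := logLower hIopen hIconv (fun t ht => (hsol t ht).2.2.2)
      (fun t ht => (hpos t ht).2.2) ht₂I hKc
    have hexp : ∀ t ∈ Ioo r t₂, Real.exp (-(K * (t₂ - r))) ≤ Real.exp (-(K * (t₂ - t))) := by
      intro t ht
      apply Real.exp_le_exp.2
      have := ht.1
      nlinarith
    have hne : (Ioo r t₂).Nonempty := nonempty_Ioo.2 hrt₂
    -- limits at the left endpoint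
    obtain ⟨La, hLadef⟩ : ∃ L : ℝ, L = sInf (a '' Ioo r t₂) := ⟨_, rfl⟩
    obtain ⟨Lb, hLbdef⟩ : ∃ L : ℝ, L = sInf (b '' Ioo r t₂) := ⟨_, rfl⟩
    obtain ⟨Lc, hLcdef⟩ : ∃ L : ℝ, L = sInf (c '' Ioo r t₂) := ⟨_, rfl⟩
    have hbdd : ∀ g : ℝ → ℝ, (∀ t ∈ I, 0 < g t) → BddBelow (g '' Ioo r t₂) := by
      rintro g hg
      exact ⟨0, by rintro y ⟨s, hs, rfl⟩; exact (hg s (hSI hs)).le⟩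
    have hLa : Filter.Tendsto a (nhdsWithin r (Ioi r)) (nhds La) := by
      rw [hLadef]
      exact MonotoneOn.tendsto_nhdsWithin_Ioo_right hne (hmonoa.mono hSI)
        (hbdd a fun t ht => (hpos t ht).1)
    have hLb : Filter.Tendsto b (nhdsWithin r (Ioi r)) (nhds Lb) := by
      rw [hLbdef]
      exact MonotoneOn.tendsto_nhdsWithin_Ioo_right hne (hmonob.mono hSI)
        (hbdd b fun t ht => (hpos t ht).2.1)
    have hLc : Filter.Tendsto c (nhdsWithin r (Ioi r)) (nhds Lc) := by
      rw [hLcdef]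
      exact MonotoneOn.tendsto_nhdsWithin_Ioo_right hne (hmonoc.mono hSI)
        (hbdd c fun t ht => (hpos t ht).2.2)
    have hLapos : 0 < La := by
      have hp2 : 0 < a t₂ := (hpos t₂ ht₂I).1
      refine lt_of_lt_of_le (by positivity : (0:ℝ) < a t₂ * Real.exp (-(K * (t₂ - r)))) ?_
      rw [hLadef]; refine le_csInf (hne.image _) ?_
      rintro y ⟨s, hs, rfl⟩
      calc a t₂ * Real.exp (-(K * (t₂ - r))) ≤ a t₂ * Real.exp (-(K * (t₂ - s))) :=
            mul_le_mul_of_nonneg_left (hexp s hs) hp2.le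
        _ ≤ a s := hlowa s (hSI hs) hs.2.le
    have hLbpos : 0 < Lb := by
      have hp2 : 0 < b t₂ := (hpos t₂ ht₂I).2.1
      refine lt_of_lt_of_le (by positivity : (0:ℝ) < b t₂ * Real.exp (-(K * (t₂ - r)))) ?_
      rw [hLbdef]; refine le_csInf (hne.image _) ?_
      rintro y ⟨s, hs, rfl⟩
      calc b t₂ * Real.exp (-(K * (t₂ - r))) ≤ b t₂ * Real.exp (-(K * (t₂ - s))) :=
            mul_le_mul_of_nonneg_left (hexp s hs) hp2.le
        _ ≤ b s := hlowb s (hSI hs) hs.2.le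
    have hLcpos : 0 < Lc := by
      have hp2 : 0 < c t₂ := (hpos t₂ ht₂I).2.2
      refine lt_of_lt_of_le (by positivity : (0:ℝ) < c t₂ * Real.exp (-(K * (t₂ - r)))) ?_
      rw [hLcdef]; refine le_csInf (hne.image _) ?_
      rintro y ⟨s, hs, rfl⟩
      calc c t₂ * Real.exp (-(K * (t₂ - r))) ≤ c t₂ * Real.exp (-(K * (t₂ - s))) :=
            mul_le_mul_of_nonneg_left (hexp s hs) hp2.le
        _ ≤ c s := hlowc s (hSI hs) hs.2.le
    -- local solution through (r, (La, Lb, Lc)) by Picard-Lindelöf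
    obtain ⟨f, hf1, ε, hε, hfd⟩ :=
      ContDiffAt.exists_forall_mem_closedBall_exists_eq_forall_mem_Ioo_hasDerivAt₀
        (e2v_contDiff.contDiffAt (x := (La, Lb, Lc))) r
    have hrIoo : r ∈ Ioo (r - ε) (r + ε) := ⟨by linarith, by linarith⟩
    have hcont_r : ContinuousAt f r := (hfd r hrIoo).continuousAt
    have h1 : Filter.Tendsto (fun s => (f s).1) (nhds r) (nhds La) := by
      have := (continuous_fst.tendsto (f r)).comp hcont_r
      rw [hf1] at this; exact this
    have h2 : Filter.Tendsto (fun s => (f s).2.1) (nhds r) (nhds Lb) := by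
      have := ((continuous_fst.comp continuous_snd).tendsto (f r)).comp hcont_r
      rw [hf1] at this; exact this
    have h3 : Filter.Tendsto (fun s => (f s).2.2) (nhds r) (nhds Lc) := by
      have := ((continuous_snd.comp continuous_snd).tendsto (f r)).comp hcont_r
      rw [hf1] at this; exact this
    have hposev : ∀ᶠ s in nhds r, 0 < (f s).1 ∧ 0 < (f s).2.1 ∧ 0 < (f s).2.2 :=
      (h1.eventually (eventually_gt_nhds hLapos)).and
        ((h2.eventually (eventually_gt_nhds hLbpos)).and
          (h3.eventually (eventually_gt_nhds hLcpos)))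
    obtain ⟨δ, hδpos, hδ⟩ := Metric.eventually_nhds_iff.1 hposev
    obtain ⟨ε₁, hε₁pos, hε₁δ, hε₁ε⟩ : ∃ ε₁ : ℝ, 0 < ε₁ ∧ ε₁ ≤ δ ∧ ε₁ ≤ ε :=
      ⟨min δ ε, lt_min hδpos hε, min_le_left _ _, min_le_right _ _⟩
    have hfposI : ∀ t : ℝ, r - ε₁ / 2 < t → t ≤ r →
        0 < (f t).1 ∧ 0 < (f t).2.1 ∧ 0 < (f t).2.2 := by
      intro t h1t h2t
      apply hδ
      rw [Real.dist_eq, abs_lt]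
      constructor <;> linarith
    have hfdom : ∀ t : ℝ, r - ε₁ / 2 < t → t ≤ r → t ∈ Ioo (r - ε) (r + ε) := by
      intro t h1t h2t
      exact ⟨by linarith, by linarith⟩
    set A : ℝ → ℝ := fun t => if t ≤ r then (f t).1 else a t with hAdef
    set B : ℝ → ℝ := fun t => if t ≤ r then (f t).2.1 else b t with hBdef
    set C : ℝ → ℝ := fun t => if t ≤ r then (f t).2.2 else c t with hCdef
    have hAeq : Set.EqOn A a I := by
      intro t ht
      rw [hI] at ht
      have : r < t := by rw [hr] at ht; exact_mod_cast ht.1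
      exact if_neg (not_le.2 this)
    have hBeq : Set.EqOn B b I := by
      intro t ht
      rw [hI] at ht
      have : r < t := by rw [hr] at ht; exact_mod_cast ht.1
      exact if_neg (not_le.2 this)
    have hCeq : Set.EqOn C c I := by
      intro t ht
      rw [hI] at ht
      have : r < t := by rw [hr] at ht; exact_mod_cast ht.1
      exact if_neg (not_le.2 this)
    have hsol' : E2Sol A B C {t : ℝ | ((r - ε₁ / 2 : ℝ) : EReal) < (t : EReal) ∧ (t : EReal) < η} := by
      intro t ht
      simp only [Set.mem_setOf_eq] at ht
      have ht1 : r - ε₁ / 2 < t := by exact_mod_cast ht.1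
      rcases lt_trichotomy t r with hcase | hcase | hcase
      · -- t < r : use the Picard solution
        obtain ⟨hd1, hd2, hd3⟩ := compDerivs (hfd t (hfdom t ht1 hcase.le))
        have hmemIio : Iio r ∈ nhds t := Iio_mem_nhds hcase
        have heA : A =ᶠ[nhds t] (fun s => (f s).1) :=
          Filter.eventually_of_mem hmemIio fun s hs => if_pos hs.le
        have heB : B =ᶠ[nhds t] (fun s => (f s).2.1) :=
          Filter.eventually_of_mem hmemIio fun s hs => if_pos hs.le
        have heC : C =ᶠ[nhds t] (fun s => (f s).2.2) :=
          Filter.eventually_of_mem hmemIio fun s hs => if_pos hs.le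
        have hAt : A t = (f t).1 := if_pos hcase.le
        have hBt : B t = (f t).2.1 := if_pos hcase.le
        have hCt : C t = (f t).2.2 := if_pos hcase.le
        obtain ⟨q1, q2, q3⟩ := hfposI t ht1 hcase.le
        refine ⟨⟨by rw [hAt]; exact q1, by rw [hBt]; exact q2, by rw [hCt]; exact q3⟩,
          ?_, ?_, ?_⟩
        · rw [hAt, hCt]; exact hd1.congr_of_eventuallyEq heA
        · rw [hAt, hBt, hCt]; exact hd2.congr_of_eventuallyEq heB
        · rw [hAt, hBt, hCt]; exact hd3.congr_of_eventuallyEq heC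
      · -- r = r : glue
        obtain rfl : t = r := hcase
        obtain ⟨hd1, hd2, hd3⟩ := compDerivs (hfd r hrIoo)
        have hAr : A r = La := by simp only [hAdef]; rw [if_pos le_rfl, hf1]
        have hBr : B r = Lb := by simp only [hBdef]; rw [if_pos le_rfl, hf1]
        have hCr : C r = Lc := by simp only [hCdef]; rw [if_pos le_rfl, hf1]
        have hv1 : (e2v (f r)).1 = La / 2 * (-La ^ 2 + Lc ^ 2) := by rw [hf1]; simp [e2v]
        have hv2 : (e2v (f r)).2.1 = Lb / 2 * (La ^ 2 + Lc ^ 2) := by rw [hf1]; simp [e2v]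
        have hv3 : (e2v (f r)).2.2 = Lc / 2 * (La ^ 2 - Lc ^ 2 + 2 * La ^ 2 * Lb ^ 2) := by
          rw [hf1]; simp [e2v]
        have hlA : HasDerivWithinAt A (La / 2 * (-La ^ 2 + Lc ^ 2)) (Iic r) r := by
          rw [← hv1]
          exact (hd1.hasDerivWithinAt).congr (fun s hs => if_pos hs) (if_pos le_rfl)
        have hlB : HasDerivWithinAt B (Lb / 2 * (La ^ 2 + Lc ^ 2)) (Iic r) r := by
          rw [← hv2]
          exact (hd2.hasDerivWithinAt).congr (fun s hs => if_pos hs) (if_pos le_rfl)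
        have hlC : HasDerivWithinAt C (Lc / 2 * (La ^ 2 - Lc ^ 2 + 2 * La ^ 2 * Lb ^ 2))
            (Iic r) r := by
          rw [← hv3]
          exact (hd3.hasDerivWithinAt).congr (fun s hs => if_pos hs) (if_pos le_rfl)
        have hgA := glueRight (g := a) (gd := fun s => a s / 2 * (-(a s) ^ 2 + (c s) ^ 2))
          (L := La) hrt₂ (fun s hs => (hsol s (hSI hs)).2.1) hLa
          ((hLa.div_const 2).mul (((hLa.pow 2).neg).add (hLc.pow 2)))
        have hgB := glueRight (g := b) (gd := fun s => b s / 2 * ((a s) ^ 2 + (c s) ^ 2))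
          (L := Lb) hrt₂ (fun s hs => (hsol s (hSI hs)).2.2.1) hLb
          ((hLb.div_const 2).mul ((hLa.pow 2).add (hLc.pow 2)))
        have hgC := glueRight (g := c)
          (gd := fun s => c s / 2 * ((a s) ^ 2 - (c s) ^ 2 + 2 * (a s) ^ 2 * (b s) ^ 2))
          (L := Lc) hrt₂ (fun s hs => (hsol s (hSI hs)).2.2.2) hLc
          ((hLc.div_const 2).mul (((hLa.pow 2).sub (hLc.pow 2)).add
            ((tendsto_const_nhds.mul (hLa.pow 2)).mul (hLb.pow 2))))
        have hcongr : ∀ (g : ℝ → ℝ) (p : ℝ × ℝ × ℝ → ℝ) (L : ℝ), (f r).1 = La → p (f r) = L →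
            True := fun _ _ _ _ _ => trivial
        have hrA : HasDerivWithinAt A (La / 2 * (-La ^ 2 + Lc ^ 2)) (Ici r) r := by
          refine hgA.congr (fun x hx => ?_) ?_
          · by_cases hxr : x ≤ r
            · have hxeq : x = r := le_antisymm hxr hx
              subst hxeq
              simp only [hAdef]
              rw [if_pos le_rfl, if_pos le_rfl, hf1]
            · simp only [hAdef]
              rw [if_neg hxr, if_neg hxr]
          · simp only [hAdef]
            rw [if_pos le_rfl, if_pos le_rfl, hf1]
        have hrB : HasDerivWithinAt B (Lb / 2 * (La ^ 2 + Lc ^ 2)) (Ici r) r := by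
          refine hgB.congr (fun x hx => ?_) ?_
          · by_cases hxr : x ≤ r
            · have hxeq : x = r := le_antisymm hxr hx
              subst hxeq
              simp only [hBdef]
              rw [if_pos le_rfl, if_pos le_rfl, hf1]
            · simp only [hBdef]
              rw [if_neg hxr, if_neg hxr]
          · simp only [hBdef]
            rw [if_pos le_rfl, if_pos le_rfl, hf1]
        have hrC : HasDerivWithinAt C (Lc / 2 * (La ^ 2 - Lc ^ 2 + 2 * La ^ 2 * Lb ^ 2))
            (Ici r) r := by
          refine hgC.congr (fun x hx => ?_) ?_
          · by_cases hxr : x ≤ r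
            · have hxeq : x = r := le_antisymm hxr hx
              subst hxeq
              simp only [hCdef]
              rw [if_pos le_rfl, if_pos le_rfl, hf1]
            · simp only [hCdef]
              rw [if_neg hxr, if_neg hxr]
          · simp only [hCdef]
            rw [if_pos le_rfl, if_pos le_rfl, hf1]
        have hdA : HasDerivAt A (La / 2 * (-La ^ 2 + Lc ^ 2)) r := by
          have := hlA.union hrA
          rw [Iic_union_Ici] at this
          exact hasDerivWithinAt_univ.1 this
        have hdB : HasDerivAt B (Lb / 2 * (La ^ 2 + Lc ^ 2)) r := by
          have := hlB.union hrB
          rw [Iic_union_Ici] at this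
          exact hasDerivWithinAt_univ.1 this
        have hdC : HasDerivAt C (Lc / 2 * (La ^ 2 - Lc ^ 2 + 2 * La ^ 2 * Lb ^ 2)) r := by
          have := hlC.union hrC
          rw [Iic_union_Ici] at this
          exact hasDerivWithinAt_univ.1 this
        refine ⟨⟨by rw [hAr]; exact hLapos, by rw [hBr]; exact hLbpos,
          by rw [hCr]; exact hLcpos⟩, ?_, ?_, ?_⟩
        · rw [hAr, hCr]; exact hdA
        · rw [hAr, hBr, hCr]; exact hdB
        · rw [hAr, hBr, hCr]; exact hdC
      · -- r < t : the original solution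
        have htI : t ∈ I := by
          rw [hI]
          exact ⟨by rw [hr]; exact_mod_cast hcase, ht.2⟩
        obtain ⟨⟨p1, p2, p3⟩, da, db, dc⟩ := hsol t htI
        have hmemIoi : Ioi r ∈ nhds t := Ioi_mem_nhds hcase
        have heA : A =ᶠ[nhds t] a :=
          Filter.eventually_of_mem hmemIoi fun s hs => if_neg (not_le.2 hs)
        have heB : B =ᶠ[nhds t] b :=
          Filter.eventually_of_mem hmemIoi fun s hs => if_neg (not_le.2 hs)
        have heC : C =ᶠ[nhds t] c :=
          Filter.eventually_of_mem hmemIoi fun s hs => if_neg (not_le.2 hs)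
        have hAt : A t = a t := if_neg (not_le.2 hcase)
        have hBt : B t = b t := if_neg (not_le.2 hcase)
        have hCt : C t = c t := if_neg (not_le.2 hcase)
        refine ⟨⟨by rw [hAt]; exact p1, by rw [hBt]; exact p2, by rw [hCt]; exact p3⟩,
          ?_, ?_, ?_⟩
        · rw [hAt, hCt]; exact da.congr_of_eventuallyEq heA
        · rw [hAt, hBt, hCt]; exact db.congr_of_eventuallyEq heB
        · rw [hAt, hBt, hCt]; exact dc.congr_of_eventuallyEq heC
    have hle' : ((r - ε₁ / 2 : ℝ) : EReal) ≤ ξ := by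
      rw [hr]
      exact_mod_cast (by linarith : r - ε₁ / 2 ≤ r)
    obtain ⟨hbad, -⟩ := hmax A B C ((r - ε₁ / 2 : ℝ) : EReal) η hle' le_rfl hsol' hAeq hBeq hCeq
    rw [hr] at hbad
    have : r - ε₁ / 2 = r := by exact_mod_cast hbad
    linarith
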